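/- For every admissible subgroup L of ℤ × ℤ, the snub-square torus graph G(L) — the edge graph of the semi-equivelar map of type {3²,4,3,4} on the torus determined by L — is Hamiltonian. -/

import Mathlib

/-- `e₁ = (1,0)` in `ℤ × ℤ`. -/
def e₁ : ℤ × ℤ := (1, 0)

/-- `e₂ = (0,1)` in `ℤ × ℤ`. -/
def e₂ : ℤ × ℤ := (0, 1)

/-- A subgroup `L ≤ ℤ × ℤ` is admissible if it has finite index and contains no nonzero
vector `(v₁, v₂)` with `|v₁| ≤ 2` and `|v₂| ≤ 2`. -/
def Admissible (L : AddSubgroup (ℤ × ℤ)) : Prop :=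
  Finite ((ℤ × ℤ) ⧸ L) ∧ ∀ v ∈ L, v ≠ 0 → ¬(|v.1| ≤ 2 ∧ |v.2| ≤ 2)

/-- A graph is Hamiltonian if it contains a cycle visiting every vertex (exactly once:
a cycle repeats no vertex other than its basepoint). -/
def SimpleGraph.Hamiltonian {α : Type*} (G : SimpleGraph α) : Prop :=
  ∃ (a : α) (p : G.Walk a a), p.IsCycle ∧ ∀ v, v ∈ p.support

/-- The edge relation of the snub-square graph over an abelian group `A`. Vertices are
written `(x, α, β)` for `(x; α, β)`. -/
def snubSquareRel {A : Type*} [AddCommGroup A] (E₁ E₂ : A) :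
    A × Fin 2 × Fin 2 → A × Fin 2 × Fin 2 → Prop := fun u v =>
  (∃ (x : A) (α : Fin 2), u = (x, α, 0) ∧ v = (x, α, 1)) ∨
  (∃ (x : A) (α : Fin 2), u = (x, α, 1) ∧ v = (x + E₁, α, 0)) ∨
  (∃ (x : A) (β : Fin 2), u = (x, 0, β) ∧ v = (x, 1, β)) ∨
  (∃ (x : A) (β : Fin 2), u = (x, 1, β) ∧ v = (x + E₂, 0, β)) ∨
  (∃ x : A, u = (x, 0, 1) ∧ v = (x, 1, 0)) ∨
  (∃ x : A, u = (x, 1, 1) ∧ v = (x + E₁ + E₂, 0, 0))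

/-- The snub-square graph over an abelian group `A`. -/
def snubSquareGraph {A : Type*} [AddCommGroup A] (E₁ E₂ : A) :
    SimpleGraph (A × Fin 2 × Fin 2) :=
  SimpleGraph.fromRel (snubSquareRel E₁ E₂)

/-- The snub-square torus graph `G(L)`, the edge graph of the semi-equivelar map of type
`{3²,4,3,4}` on the torus determined by `L`. -/
def snubSquareTorusGraph (L : AddSubgroup (ℤ × ℤ)) :
    SimpleGraph (((ℤ × ℤ) ⧸ L) × Fin 2 × Fin 2) :=
  snubSquareGraph (QuotientAddGroup.mk e₁) (QuotientAddGroup.mk e₂)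

namespace SnubAux

open SimpleGraph

variable {α : Type*} {G : SimpleGraph α}

/-- Build a walk from a chain of adjacent vertices. -/
def walkOfChain (G : SimpleGraph α) :
    ∀ (a : α) (l : List α), List.Chain G.Adj a l →
      G.Walk a ((a :: l).getLast (List.cons_ne_nil _ _))
  | _, [], _ => SimpleGraph.Walk.nil
  | a, b :: l, h =>
      SimpleGraph.Walk.cons (List.chain_cons.mp h).1
        (walkOfChain G b l (List.chain_cons.mp h).2)

@[simp] lemma walkOfChain_support (G : SimpleGraph α) :
    ∀ (a : α) (l : List α) (h : List.Chain G.Adj a l),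
      (walkOfChain G a l h).support = a :: l
  | _, [], _ => rfl
  | a, b :: l, h => by
      exact congrArg (List.cons a) (walkOfChain_support G b l _)

lemma getLast_eq_of_eq {l₁ l₂ : List α} (h : l₁ = l₂) (h₁ : l₁ ≠ []) (h₂ : l₂ ≠ []) :
    l₁.getLast h₁ = l₂.getLast h₂ := by subst h; rfl

lemma not_mem_edges_of_isPath {a z : α} (p : G.Walk a z) (hp : p.IsPath)
    (hl : 2 ≤ p.length) : s(z, a) ∉ p.edges := by
  cases p with
  | nil => simp at hl
  | @cons _ w _ h q =>
      rw [SimpleGraph.Walk.cons_isPath_iff] at hp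
      intro hmem
      rw [SimpleGraph.Walk.edges_cons, List.mem_cons] at hmem
      rcases hmem with hmem | hmem
      · rw [Sym2.eq_iff] at hmem
        rcases hmem with ⟨rfl, rfl⟩ | ⟨hzw, -⟩
        · exact hp.2 q.end_mem_support
        · subst hzw
          have : q = SimpleGraph.Walk.nil := SimpleGraph.Walk.isPath_iff_eq_nil.mp hp.1
          subst this
          simp at hl
      · exact hp.2 (q.snd_mem_support_of_mem_edges hmem)

theorem hamiltonian_of_fn (G : SimpleGraph α) (f : ℕ → α) (n : ℕ) (hn : 3 ≤ n)
    (hadj : ∀ k, k + 1 < n → G.Adj (f k) (f (k + 1)))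
    (hclose : G.Adj (f (n - 1)) (f 0))
    (hnd : ((List.range n).map f).Nodup)
    (hcov : ∀ v, v ∈ (List.range n).map f) : G.Hamiltonian := by
  obtain ⟨m, rfl⟩ : ∃ m, n = m + 1 := ⟨n - 1, by omega⟩;
  have hlist : (List.range (m + 1)).map f = f 0 :: (List.range m).map (fun i => f (i + 1)) := by
    rw [List.range_succ_eq_map, List.map_cons, List.map_map]
    rfl
  have hchain : List.Chain G.Adj (f 0) ((List.range m).map (fun i => f (i + 1))) := by
    have h' : List.Chain' G.Adj ((List.range (m + 1)).map f) := by
      refine (List.isChain_map _).mpr ?_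
      exact (List.isChain_range_succ _ m).mpr fun i hi => hadj i (by omega)
    rw [hlist] at h'
    exact h'
  have hgetLast : ∀ (h : ((List.range (m+1)).map f) ≠ []),
      ((List.range (m + 1)).map f).getLast h = f m := by
    intro h
    have e1 : (List.range (m+1)).map f = (List.range m).map f ++ [f m] := by
      rw [List.range_succ, List.map_append]; rfl
    rw [getLast_eq_of_eq e1 h (by simp), List.getLast_append_of_right_ne_nil _ _ (by simp)]
    rfl
  set l' := (List.range m).map (fun i => f (i + 1)) with hl'
  have hlast : (f 0 :: l').getLast (List.cons_ne_nil _ _) = f m := by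
    rw [getLast_eq_of_eq hlist.symm _ (by simp), hgetLast]
  let p := walkOfChain G (f 0) l' hchain
  have hsup : p.support = f 0 :: l' := walkOfChain_support G _ _ _
  have hp : p.IsPath := SimpleGraph.Walk.IsPath.mk' (by rw [hsup, ← hlist]; exact hnd)
  have hplen : 2 ≤ p.length := by
    have h2 := p.length_support
    rw [hsup] at h2
    simp only [List.length_cons, hl', List.length_map, List.length_range] at h2
    omega
  have hcl : G.Adj ((f 0 :: l').getLast (List.cons_ne_nil _ _)) (f 0) := by
    rw [hlast]; simpa using hclose
  let c := SimpleGraph.Walk.cons hcl p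
  have hcyc : c.IsCycle := by
    rw [SimpleGraph.Walk.cons_isCycle_iff]
    exact ⟨hp, not_mem_edges_of_isPath p hp hplen⟩
  refine ⟨_, c, hcyc, fun v => ?_⟩
  have hv := hcov v
  rw [hlist] at hv
  simp only [c, SimpleGraph.Walk.support_cons, List.mem_cons]
  right
  rw [hsup]
  exact hv

theorem exists_rep {Q : Type*} [AddCommGroup Q] [Finite Q] (aa bb : Q)
    (hgen : ∀ x : Q, ∃ m n : ℤ, m • aa + n • bb = x) :
    ∃ t r idx : ℕ, 0 < t ∧ 0 < r ∧ idx < r ∧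
      ((t : ℤ) • bb + (idx : ℤ) • aa = 0) ∧
      (∀ x : Q, ∃ j i : ℕ, j < t ∧ i < r ∧ (j : ℤ) • bb + (i : ℤ) • aa = x) ∧
      (∀ j i j' i' : ℕ, j < t → i < r → j' < t → i' < r →
        (j : ℤ) • bb + (i : ℤ) • aa = (j' : ℤ) • bb + (i' : ℤ) • aa → j = j' ∧ i = i') := by
  classical
  set r := addOrderOf aa with hr_def
  have hr : 0 < r := addOrderOf_pos aa
  have hra : ∀ m : ℤ, (r : ℤ) ∣ m ↔ m • aa = 0 := fun m => addOrderOf_dvd_iff_zsmul_eq_zero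
  have hP : ∃ n : ℕ, 0 < n ∧ ∃ m : ℤ, (n : ℤ) • bb = m • aa :=
    ⟨addOrderOf bb, addOrderOf_pos bb, 0, by
      rw [natCast_zsmul, addOrderOf_nsmul_eq_zero, zero_zsmul]⟩
  set t := Nat.find hP with ht_def
  obtain ⟨ht0, s, hs⟩ := Nat.find_spec hP
  rw [← ht_def] at ht0 hs
  have hmin : ∀ n, n < t → ¬(0 < n ∧ ∃ m : ℤ, (n : ℤ) • bb = m • aa) :=
    fun n h => Nat.find_min hP h
  have hdvd : ∀ m : ℤ, (∃ c : ℤ, m • bb = c • aa) → (t : ℤ) ∣ m := by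
    rintro m ⟨c, hc⟩
    have h1 : 0 ≤ m % t := Int.emod_nonneg m (by exact_mod_cast ht0.ne')
    have h2 : m % t < t := Int.emod_lt_of_pos m (by exact_mod_cast ht0)
    set u := (m % t).toNat with hu_def
    have hu : (u : ℤ) = m % t := Int.toNat_of_nonneg h1
    have hum : (u : ℤ) = m - t * (m / t) := by rw [hu]; exact Int.emod_def m t
    have hub : (u : ℤ) • bb = (c - m / t * s) • aa := by
      rw [hum, sub_zsmul, hc, sub_zsmul, mul_comm ((t : ℤ)) (m / t), mul_zsmul, hs,
        ← mul_zsmul]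
    have hu0 : u = 0 := by
      by_contra h
      exact hmin u (by omega) ⟨Nat.pos_of_ne_zero h, _, hub⟩
    exact Int.dvd_of_emod_eq_zero (by omega)
  have hsurj : ∀ x : Q, ∃ j i : ℕ, j < t ∧ i < r ∧ (j : ℤ) • bb + (i : ℤ) • aa = x := by
    intro x
    obtain ⟨m, n, hmn⟩ := hgen x
    have h1 : 0 ≤ n % t := Int.emod_nonneg n (by exact_mod_cast ht0.ne')
    have h2 : n % t < t := Int.emod_lt_of_pos n (by exact_mod_cast ht0)
    set c : ℤ := m + n / t * s with hc_def
    have h3 : 0 ≤ c % r := Int.emod_nonneg c (by exact_mod_cast hr.ne')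
    have h4 : c % r < r := Int.emod_lt_of_pos c (by exact_mod_cast hr)
    refine ⟨(n % t).toNat, (c % r).toNat, by omega, by omega, ?_⟩
    rw [Int.toNat_of_nonneg h1, Int.toNat_of_nonneg h3]
    have e1 : (c % r) • aa = c • aa := by
      have e0 : (c % r - c) • aa = 0 := by
        rw [← hra]
        exact ⟨-(c / r), by rw [Int.emod_def]; ring⟩
      have : (c % r) • aa = (c % r - c) • aa + c • aa := by
        rw [← add_zsmul]; ring_nf
      rw [this, e0, zero_add]
    rw [e1, ← hmn]
    have e2 : n • bb = (n / t) • ((t : ℤ) • bb) + (n % t) • bb := by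
      rw [← mul_zsmul, ← add_zsmul, mul_comm]
      rw [Int.mul_ediv_add_emod n t]
    rw [e2, hs, ← mul_zsmul, hc_def]
    rw [add_zsmul]
    abel
  have hinj : ∀ j i j' i' : ℕ, j < t → i < r → j' < t → i' < r →
      (j : ℤ) • bb + (i : ℤ) • aa = (j' : ℤ) • bb + (i' : ℤ) • aa → j = j' ∧ i = i' := by
    intro j i j' i' hj hi hj' hi' heq
    have h1 : ((j : ℤ) - (j' : ℤ)) • bb = ((i' : ℤ) - (i : ℤ)) • aa := by
      have h0 : ((j : ℤ) • bb + (i : ℤ) • aa) - ((j' : ℤ) • bb + (i' : ℤ) • aa) = 0 :=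
        sub_eq_zero_of_eq heq
      rw [sub_zsmul, sub_zsmul, ← sub_eq_zero, ← h0]
      abel
    have hd := hdvd ((j : ℤ) - j') ⟨_, h1⟩
    have hjj : (j : ℤ) - j' = 0 := by
      refine Int.eq_zero_of_abs_lt_dvd hd ?_
      rw [abs_lt]; constructor <;> omega
    have hj2 : j = j' := by omega
    subst hj2
    have h2 : ((i' : ℤ) - (i : ℤ)) • aa = 0 := by rw [← h1, hjj, zero_zsmul]
    have hd2 : (r : ℤ) ∣ ((i' : ℤ) - i) := (hra _).mpr h2
    have : (i' : ℤ) - i = 0 := by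
      refine Int.eq_zero_of_abs_lt_dvd hd2 ?_
      rw [abs_lt]; constructor <;> omega
    exact ⟨rfl, by omega⟩
  have h5 : 0 ≤ (-s) % r := Int.emod_nonneg _ (by exact_mod_cast hr.ne')
  have h6 : (-s) % r < r := Int.emod_lt_of_pos _ (by exact_mod_cast hr)
  refine ⟨t, r, ((-s) % r).toNat, ht0, hr, by omega, ?_, hsurj, hinj⟩
  rw [hs, Int.toNat_of_nonneg h5, ← add_zsmul, ← hra]
  exact ⟨-((-s) / r), by rw [Int.emod_def]; ring⟩
def slot4 : ℕ → Fin 2 × Fin 2 := fun m =>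
  if m = 0 then (0, 0) else if m = 1 then (1, 0) else if m = 2 then (1, 1) else (0, 1)

def patF (r y k : ℕ) : ℕ × Fin 2 × Fin 2 :=
  if k < 4 * y then (k / 4, slot4 (k % 4))
  else if k < 2 * r + 2 * y then
    (y + (k - 4 * y) / 2, if (k - 4 * y) % 2 = 0 then (0, 0) else (0, 1))
  else (r - 1 - (k - (2 * r + 2 * y)) / 2,
    if (k - (2 * r + 2 * y)) % 2 = 0 then (1, 1) else (1, 0))

def cellStep : Fin 2 × Fin 2 → Fin 2 × Fin 2 → Prop := fun p q =>
  (p = (0,0) ∧ q = (1,0)) ∨ (p = (1,0) ∧ q = (1,1)) ∨ (p = (1,1) ∧ q = (0,1)) ∨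
  (p = (0,0) ∧ q = (0,1)) ∨ (p = (0,1) ∧ q = (1,1)) ∨ (p = (1,1) ∧ q = (1,0))

def StepRel : ℕ × Fin 2 × Fin 2 → ℕ × Fin 2 × Fin 2 → Prop := fun u v =>
  (u.1 = v.1 ∧ cellStep u.2 v.2) ∨
  (v.1 = u.1 + 1 ∧ u.2 = (0, 1) ∧ v.2 = (0, 0)) ∨
  (u.1 = v.1 + 1 ∧ u.2 = (1, 0) ∧ v.2 = (1, 1))

lemma stepIntra {c : ℕ} {p q : Fin 2 × Fin 2} (h : cellStep p q) :
    StepRel (c, p) (c, q) := Or.inl ⟨rfl, h⟩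

lemma stepUp {c : ℕ} : StepRel (c, ((0 : Fin 2), (1 : Fin 2))) (c + 1, ((0:Fin 2), (0:Fin 2))) :=
  Or.inr (Or.inl ⟨rfl, rfl, rfl⟩)

lemma stepDown {c : ℕ} : StepRel (c + 1, ((1:Fin 2), (0:Fin 2))) (c, ((1:Fin 2), (1:Fin 2))) :=
  Or.inr (Or.inr ⟨rfl, rfl, rfl⟩)

lemma patF_step (r y k : ℕ) (hy : y < r) (hk : k + 1 < 4 * r) :
    StepRel (patF r y k) (patF r y (k + 1)) := by
  rcases lt_or_ge k (4 * y) with h1 | h1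
  · -- phase 1
    have hm : k % 4 = 0 ∨ k % 4 = 1 ∨ k % 4 = 2 ∨ k % 4 = 3 := by omega
    rcases hm with hm | hm | hm | hm
    · have e1 : patF r y k = (k / 4, (0, 0)) := by
        simp only [patF, if_pos h1, hm]; rfl
      have e2 : patF r y (k+1) = (k / 4, (1, 0)) := by
        have hlt : k + 1 < 4 * y := by omega
        have hd : (k+1) / 4 = k / 4 := by omega
        have hm2 : (k+1) % 4 = 1 := by omega
        simp only [patF, if_pos hlt, hd, hm2]; rfl
      rw [e1, e2]; exact stepIntra (by simp [cellStep])
    · have e1 : patF r y k = (k / 4, (1, 0)) := by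
        simp only [patF, if_pos h1, hm]; rfl
      have e2 : patF r y (k+1) = (k / 4, (1, 1)) := by
        have hlt : k + 1 < 4 * y := by omega
        have hd : (k+1) / 4 = k / 4 := by omega
        have hm2 : (k+1) % 4 = 2 := by omega
        simp only [patF, if_pos hlt, hd, hm2]; rfl
      rw [e1, e2]; exact stepIntra (by simp [cellStep])
    · have e1 : patF r y k = (k / 4, (1, 1)) := by
        simp only [patF, if_pos h1, hm]; rfl
      have e2 : patF r y (k+1) = (k / 4, (0, 1)) := by
        have hlt : k + 1 < 4 * y := by omega
        have hd : (k+1) / 4 = k / 4 := by omega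
        have hm2 : (k+1) % 4 = 3 := by omega
        simp only [patF, if_pos hlt, hd, hm2]; rfl
      rw [e1, e2]; exact stepIntra (by simp [cellStep])
    · have e1 : patF r y k = (k / 4, (0, 1)) := by
        simp only [patF, if_pos h1, hm]; rfl
      rcases lt_or_ge (k+1) (4*y) with h2 | h2
      · have e2 : patF r y (k+1) = (k / 4 + 1, (0, 0)) := by
          have hd : (k+1) / 4 = k / 4 + 1 := by omega
          have hm2 : (k+1) % 4 = 0 := by omega
          simp only [patF, if_pos h2, hd, hm2]; rfl
        rw [e1, e2]; exact stepUp
      · have h3 : k + 1 = 4 * y := by omega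
        have e2 : patF r y (k+1) = (k / 4 + 1, (0, 0)) := by
          have hn1 : ¬(k + 1 < 4 * y) := by omega
          have hn2 : k + 1 < 2 * r + 2 * y := by omega
          have hd : y + (k + 1 - 4 * y) / 2 = k / 4 + 1 := by omega
          have hm2 : (k + 1 - 4 * y) % 2 = 0 := by omega
          simp only [patF, if_neg hn1, if_pos hn2, hd, hm2]; rfl
        rw [e1, e2]; exact stepUp
  · rcases lt_or_ge k (2 * r + 2 * y) with h2 | h2
    · -- phase 2
      have hn1 : ¬(k < 4 * y) := by omega
      rcases Nat.even_or_odd (k - 4 * y) with hpar | hpar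
      · obtain ⟨c0, hc0⟩ := hpar
        have hm : (k - 4 * y) % 2 = 0 := by omega
        have e1 : patF r y k = (y + (k - 4 * y) / 2, (0, 0)) := by
          simp only [patF, if_neg hn1, if_pos h2, hm]; rfl
        have e2 : patF r y (k+1) = (y + (k - 4 * y) / 2, (0, 1)) := by
          have hn1' : ¬(k + 1 < 4 * y) := by omega
          have h2' : k + 1 < 2 * r + 2 * y := by omega
          have hd : (k + 1 - 4 * y) / 2 = (k - 4 * y) / 2 := by omega
          have hm2 : ¬((k + 1 - 4 * y) % 2 = 0) := by omega
          simp only [patF, if_neg hn1', if_pos h2', hd, if_neg hm2]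
        rw [e1, e2]; exact stepIntra (by simp [cellStep])
      · have hm : ¬((k - 4 * y) % 2 = 0) := by
          rcases hpar with ⟨c, hc⟩; omega
        rcases lt_or_ge (k+1) (2 * r + 2 * y) with h3 | h3
        · have e1 : patF r y k = (y + (k - 4 * y) / 2, (0, 1)) := by
            simp only [patF, if_neg hn1, if_pos h2, if_neg hm]
          have e2 : patF r y (k+1) = ((y + (k - 4 * y) / 2) + 1, (0, 0)) := by
            have hn1' : ¬(k + 1 < 4 * y) := by omega
            have hd : y + (k + 1 - 4 * y) / 2 = (y + (k - 4 * y) / 2) + 1 := by omega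
            have hm2 : (k + 1 - 4 * y) % 2 = 0 := by omega
            simp only [patF, if_neg hn1', if_pos h3, hd, hm2]; rfl
          rw [e1, e2]; exact stepUp
        · have h4 : k + 1 = 2 * r + 2 * y := by omega
          have e1 : patF r y k = (r - 1, (0, 1)) := by
            have hd : y + (k - 4 * y) / 2 = r - 1 := by omega
            simp only [patF, if_neg hn1, if_pos h2, if_neg hm, hd]
          have e2 : patF r y (k+1) = (r - 1, (1, 1)) := by
            have hn1' : ¬(k + 1 < 4 * y) := by omega
            have hn2' : ¬(k + 1 < 2 * r + 2 * y) := by omega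
            have hd : r - 1 - (k + 1 - (2 * r + 2 * y)) / 2 = r - 1 := by omega
            have hm2 : (k + 1 - (2 * r + 2 * y)) % 2 = 0 := by omega
            simp only [patF, if_neg hn1', if_neg hn2', hd, hm2]; rfl
          rw [e1, e2]; exact stepIntra (by simp [cellStep])
    · -- phase 3
      have hn1 : ¬(k < 4 * y) := by omega
      have hn2 : ¬(k < 2 * r + 2 * y) := by omega
      have hn1' : ¬(k + 1 < 4 * y) := by omega
      have hn2' : ¬(k + 1 < 2 * r + 2 * y) := by omega
      rcases Nat.even_or_odd (k - (2 * r + 2 * y)) with hpar | hpar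
      · obtain ⟨c0, hc0⟩ := hpar
        have hm : (k - (2 * r + 2 * y)) % 2 = 0 := by omega
        have e1 : patF r y k = (r - 1 - (k - (2 * r + 2 * y)) / 2, (1, 1)) := by
          simp only [patF, if_neg hn1, if_neg hn2, hm]; rfl
        have e2 : patF r y (k+1) = (r - 1 - (k - (2 * r + 2 * y)) / 2, (1, 0)) := by
          have hd : r - 1 - (k + 1 - (2 * r + 2 * y)) / 2
              = r - 1 - (k - (2 * r + 2 * y)) / 2 := by omega
          have hm2 : ¬((k + 1 - (2 * r + 2 * y)) % 2 = 0) := by omega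
          simp only [patF, if_neg hn1', if_neg hn2', hd, if_neg hm2]
        rw [e1, e2]; exact stepIntra (by simp [cellStep])
      · have hm : ¬((k - (2 * r + 2 * y)) % 2 = 0) := by
          rcases hpar with ⟨c, hc⟩; omega
        have hbound : (k - (2 * r + 2 * y)) / 2 + 1 ≤ r - 1 := by omega
        have e1 : patF r y k
            = ((r - 1 - ((k - (2 * r + 2 * y)) / 2 + 1)) + 1, (1, 0)) := by
          have hd : r - 1 - (k - (2 * r + 2 * y)) / 2
              = (r - 1 - ((k - (2 * r + 2 * y)) / 2 + 1)) + 1 := by omega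
          simp only [patF, if_neg hn1, if_neg hn2, if_neg hm, hd]
        have e2 : patF r y (k+1)
            = (r - 1 - ((k - (2 * r + 2 * y)) / 2 + 1), (1, 1)) := by
          have hd : r - 1 - (k + 1 - (2 * r + 2 * y)) / 2
              = r - 1 - ((k - (2 * r + 2 * y)) / 2 + 1) := by omega
          have hm2 : (k + 1 - (2 * r + 2 * y)) % 2 = 0 := by omega
          simp only [patF, if_neg hn1', if_neg hn2', hd, hm2]; rfl
        rw [e1, e2]; exact stepDown

lemma patF_zero (r y : ℕ) (hr : 0 < r) : patF r y 0 = (0, (0, 0)) := by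
  rcases Nat.eq_zero_or_pos y with rfl | hy
  · have hn1 : ¬((0:ℕ) < 4 * 0) := by omega
    have h2 : (0:ℕ) < 2 * r + 2 * 0 := by omega
    simp only [patF, if_neg hn1, if_pos h2]
    norm_num
  · have h1 : (0:ℕ) < 4 * y := by omega
    simp only [patF, if_pos h1]
    norm_num [slot4]

lemma patF_last (r y : ℕ) (hy : y < r) : patF r y (4 * r - 1) = (y, (1, 0)) := by
  have hn1 : ¬(4 * r - 1 < 4 * y) := by omega
  have hn2 : ¬(4 * r - 1 < 2 * r + 2 * y) := by omega
  have hd : r - 1 - (4 * r - 1 - (2 * r + 2 * y)) / 2 = y := by omega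
  have hm : ¬((4 * r - 1 - (2 * r + 2 * y)) % 2 = 0) := by omega
  simp only [patF, if_neg hn1, if_neg hn2, hd, if_neg hm]

lemma patF_cov (r y i : ℕ) (α β : Fin 2) (hy : y < r) (hi : i < r) :
    ∃ k, k < 4 * r ∧ patF r y k = (i, (α, β)) := by
  fin_cases α <;> fin_cases β
  · -- (0,0)
    rcases lt_or_ge i y with h | h
    · refine ⟨4 * i, by omega, ?_⟩
      have h1 : 4 * i < 4 * y := by omega
      have hd : 4 * i / 4 = i := by omega
      have hm : 4 * i % 4 = 0 := by omega
      simp only [patF, if_pos h1, hd, hm]; rfl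
    · refine ⟨4 * y + 2 * (i - y), by omega, ?_⟩
      have hn1 : ¬(4 * y + 2 * (i - y) < 4 * y) := by omega
      have h2 : 4 * y + 2 * (i - y) < 2 * r + 2 * y := by omega
      have hd : y + (4 * y + 2 * (i - y) - 4 * y) / 2 = i := by omega
      have hm : (4 * y + 2 * (i - y) - 4 * y) % 2 = 0 := by omega
      simp only [patF, if_neg hn1, if_pos h2, hd, hm]; rfl
  · -- (0,1)
    rcases lt_or_ge i y with h | h
    · refine ⟨4 * i + 3, by omega, ?_⟩
      have h1 : 4 * i + 3 < 4 * y := by omega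
      have hd : (4 * i + 3) / 4 = i := by omega
      have hm : (4 * i + 3) % 4 = 3 := by omega
      simp only [patF, if_pos h1, hd, hm]; rfl
    · refine ⟨4 * y + 2 * (i - y) + 1, by omega, ?_⟩
      have hn1 : ¬(4 * y + 2 * (i - y) + 1 < 4 * y) := by omega
      have h2 : 4 * y + 2 * (i - y) + 1 < 2 * r + 2 * y := by omega
      have hd : y + (4 * y + 2 * (i - y) + 1 - 4 * y) / 2 = i := by omega
      have hm : ¬((4 * y + 2 * (i - y) + 1 - 4 * y) % 2 = 0) := by omega
      simp only [patF, if_neg hn1, if_pos h2, hd, if_neg hm]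
      rfl
  · -- (1,0)
    rcases lt_or_ge i y with h | h
    · refine ⟨4 * i + 1, by omega, ?_⟩
      have h1 : 4 * i + 1 < 4 * y := by omega
      have hd : (4 * i + 1) / 4 = i := by omega
      have hm : (4 * i + 1) % 4 = 1 := by omega
      simp only [patF, if_pos h1, hd, hm]; rfl
    · refine ⟨2 * r + 2 * y + 2 * (r - 1 - i) + 1, by omega, ?_⟩
      have hn1 : ¬(2 * r + 2 * y + 2 * (r - 1 - i) + 1 < 4 * y) := by omega
      have hn2 : ¬(2 * r + 2 * y + 2 * (r - 1 - i) + 1 < 2 * r + 2 * y) := by omega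
      have hd : r - 1 - (2 * r + 2 * y + 2 * (r - 1 - i) + 1 - (2 * r + 2 * y)) / 2 = i := by
        omega
      have hm : ¬((2 * r + 2 * y + 2 * (r - 1 - i) + 1 - (2 * r + 2 * y)) % 2 = 0) := by omega
      simp only [patF, if_neg hn1, if_neg hn2, hd, if_neg hm]
      rfl
  · -- (1,1)
    rcases lt_or_ge i y with h | h
    · refine ⟨4 * i + 2, by omega, ?_⟩
      have h1 : 4 * i + 2 < 4 * y := by omega
      have hd : (4 * i + 2) / 4 = i := by omega
      have hm : (4 * i + 2) % 4 = 2 := by omega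
      simp only [patF, if_pos h1, hd, hm]; rfl
    · refine ⟨2 * r + 2 * y + 2 * (r - 1 - i), by omega, ?_⟩
      have hn1 : ¬(2 * r + 2 * y + 2 * (r - 1 - i) < 4 * y) := by omega
      have hn2 : ¬(2 * r + 2 * y + 2 * (r - 1 - i) < 2 * r + 2 * y) := by omega
      have hd : r - 1 - (2 * r + 2 * y + 2 * (r - 1 - i) - (2 * r + 2 * y)) / 2 = i := by omega
      have hm : (2 * r + 2 * y + 2 * (r - 1 - i) - (2 * r + 2 * y)) % 2 = 0 := by omega
      simp only [patF, if_neg hn1, if_neg hn2, hd, hm]; rfl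

lemma split_idx (b q s : ℕ) (hb : 0 < b) (hs : s < b) :
    (q * b + s) / b = q ∧ (q * b + s) % b = s := by
  constructor
  · rw [mul_comm, Nat.mul_add_div hb, Nat.div_eq_of_lt hs, add_zero]
  · rw [mul_comm, Nat.mul_add_mod, Nat.mod_eq_of_lt hs]

lemma succ_divmod (b k : ℕ) (hb : 0 < b) (hlt : k % b + 1 < b) :
    (k + 1) / b = k / b ∧ (k + 1) % b = k % b + 1 := by
  have h := Nat.div_add_mod' k b
  have e : k + 1 = (k / b) * b + (k % b + 1) := by omega
  rw [e]
  exact split_idx b (k / b) (k % b + 1) hb hlt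

lemma wrap_divmod (b k : ℕ) (hb : 0 < b) (hge : k % b = b - 1) :
    (k + 1) / b = k / b + 1 ∧ (k + 1) % b = 0 := by
  have h := Nat.div_add_mod' k b
  have e2 : (k / b + 1) * b = (k / b) * b + b := by ring
  have e : k + 1 = (k / b + 1) * b + 0 := by omega
  rw [e]
  exact split_idx b (k / b + 1) 0 hb hb

lemma adj_intra {A : Type*} [AddCommGroup A] (E₁ E₂ : A) (x : A) (p q : Fin 2 × Fin 2)
    (h : cellStep p q) : (snubSquareGraph E₁ E₂).Adj (x, p) (x, q) := by
  rcases h with ⟨hp, hq⟩ | ⟨hp, hq⟩ | ⟨hp, hq⟩ | ⟨hp, hq⟩ | ⟨hp, hq⟩ | ⟨hp, hq⟩ <;>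
    subst hp <;> subst hq <;>
    rw [snubSquareGraph, SimpleGraph.fromRel_adj] <;>
    refine ⟨by simp [Prod.ext_iff], ?_⟩
  · exact Or.inl (Or.inr (Or.inr (Or.inl ⟨x, 0, rfl, rfl⟩)))
  · exact Or.inl (Or.inl ⟨x, 1, rfl, rfl⟩)
  · exact Or.inr (Or.inr (Or.inr (Or.inl ⟨x, 1, rfl, rfl⟩)))
  · exact Or.inl (Or.inl ⟨x, 0, rfl, rfl⟩)
  · exact Or.inl (Or.inr (Or.inr (Or.inl ⟨x, 1, rfl, rfl⟩)))
  · exact Or.inr (Or.inl ⟨x, 1, rfl, rfl⟩)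

lemma adj_e1 {A : Type*} [AddCommGroup A] (E₁ E₂ : A) (x : A) (α : Fin 2) :
    (snubSquareGraph E₁ E₂).Adj (x, (α, 1)) (x + E₁, (α, 0)) := by
  rw [snubSquareGraph, SimpleGraph.fromRel_adj]
  refine ⟨by simp [Prod.ext_iff], ?_⟩
  exact Or.inl (Or.inr (Or.inl ⟨x, α, rfl, rfl⟩))

lemma adj_e2 {A : Type*} [AddCommGroup A] (E₁ E₂ : A) (x : A) (β : Fin 2) :
    (snubSquareGraph E₁ E₂).Adj (x, (1, β)) (x + E₂, (0, β)) := by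
  rw [snubSquareGraph, SimpleGraph.fromRel_adj]
  refine ⟨by simp [Prod.ext_iff], ?_⟩
  exact Or.inl (Or.inr (Or.inr (Or.inr (Or.inl ⟨x, β, rfl, rfl⟩))))

end SnubAux

open SnubAux in
/-- Every snub-square torus graph (type `{3²,4,3,4}`) is Hamiltonian. -/
theorem snubSquareTorusGraph_hamiltonian (L : AddSubgroup (ℤ × ℤ)) (hL : Admissible L) :
    (snubSquareTorusGraph L).Hamiltonian := by
  classical
  haveI : Finite ((ℤ × ℤ) ⧸ L) := hL.1
  haveI : Fintype ((ℤ × ℤ) ⧸ L) := Fintype.ofFinite _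
  set QL := (ℤ × ℤ) ⧸ L with hQL
  set aa : QL := QuotientAddGroup.mk e₁ with haa
  set bb : QL := QuotientAddGroup.mk e₂ with hbb
  set G := snubSquareTorusGraph L with hG
  have hGadj₁ : ∀ (x : QL) (p q : Fin 2 × Fin 2), cellStep p q → G.Adj (x, p) (x, q) :=
    fun x p q h => adj_intra aa bb x p q h
  have hGadj₂ : ∀ (x : QL) (α : Fin 2), G.Adj (x, (α, 1)) (x + aa, (α, 0)) :=
    fun x α => adj_e1 aa bb x α
  have hGadj₃ : ∀ (x : QL) (β : Fin 2), G.Adj (x, (1, β)) (x + bb, (0, β)) :=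
    fun x β => adj_e2 aa bb x β
  have hgen : ∀ x : QL, ∃ m n : ℤ, m • aa + n • bb = x := by
    intro x
    obtain ⟨v, rfl⟩ := QuotientAddGroup.mk_surjective x
    refine ⟨v.1, v.2, ?_⟩
    have hv : (v.1 • e₁ + v.2 • e₂ : ℤ × ℤ) = v := by
      simp [e₁, e₂, Prod.ext_iff, smul_eq_mul]
    calc v.1 • aa + v.2 • bb = QuotientAddGroup.mk (v.1 • e₁ + v.2 • e₂) := by
          rw [haa, hbb, QuotientAddGroup.mk_add, QuotientAddGroup.mk_zsmul,
            QuotientAddGroup.mk_zsmul]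
      _ = QuotientAddGroup.mk v := by rw [hv]
  obtain ⟨t, r, idx, ht0, hr0, hidx, hclose0, hsurj, hinj⟩ := exists_rep aa bb hgen
  set yf : ℕ → ℕ := fun j => if j = t - 1 then idx else 0 with hyf
  have hyfr : ∀ j, yf j < r := by
    intro j
    rw [hyf]
    dsimp only
    split <;> omega
  set emb : ℕ → (ℕ × Fin 2 × Fin 2) → QL × Fin 2 × Fin 2 :=
    fun j u => ((j : ℤ) • bb + (u.1 : ℤ) • aa, u.2) with hemb
  have stepAdj : ∀ (j : ℕ) (u v : ℕ × Fin 2 × Fin 2), StepRel u v →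
      G.Adj (emb j u) (emb j v) := by
    rintro j ⟨cu, su⟩ ⟨cv, sv⟩ (⟨hc, hcell⟩ | ⟨hc, hsu, hsv⟩ | ⟨hc, hsu, hsv⟩)
    · simp only at hc
      subst hc
      exact hGadj₁ _ _ _ hcell
    · simp only at hc hsu hsv
      subst hc; subst hsu; subst hsv
      have hx : ((cu + 1 : ℕ) : ℤ) • aa = (cu : ℤ) • aa + aa := by
        push_cast
        rw [add_zsmul, one_zsmul]
      show G.Adj ((j : ℤ) • bb + (cu : ℤ) • aa, ((0:Fin 2), (1:Fin 2)))
        ((j : ℤ) • bb + ((cu + 1 : ℕ) : ℤ) • aa, ((0:Fin 2), (0:Fin 2)))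
      rw [hx, ← add_assoc]
      exact hGadj₂ _ 0
    · simp only at hc hsu hsv
      subst hc; subst hsu; subst hsv
      have hx : ((cv + 1 : ℕ) : ℤ) • aa = (cv : ℤ) • aa + aa := by
        push_cast
        rw [add_zsmul, one_zsmul]
      show G.Adj ((j : ℤ) • bb + ((cv + 1 : ℕ) : ℤ) • aa, ((1:Fin 2), (0:Fin 2)))
        ((j : ℤ) • bb + (cv : ℤ) • aa, ((1:Fin 2), (1:Fin 2)))
      have h2 := (hGadj₂ ((j : ℤ) • bb + (cv : ℤ) • aa) 1).symm
      rw [hx, ← add_assoc]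
      exact h2
  set n := 4 * r * t with hn
  set bigF : ℕ → QL × Fin 2 × Fin 2 :=
    fun k => emb (k / (4 * r)) (patF r (yf (k / (4 * r))) (k % (4 * r))) with hbigF
  have hr4 : 0 < 4 * r := by omega
  have hnt : n = t * (4 * r) := by rw [hn]; ring
  have hn4 : 4 ≤ n := by
    have h1 : 4 * r ≤ t * (4 * r) := Nat.le_mul_of_pos_left (4 * r) ht0
    omega
  have hadj : ∀ k, k + 1 < n → G.Adj (bigF k) (bigF (k + 1)) := by
    intro k hk
    rcases Nat.lt_or_ge (k % (4 * r) + 1) (4 * r) with hlt | hge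
    · obtain ⟨h1, h2⟩ := succ_divmod (4 * r) k hr4 hlt
      have e2 : bigF (k + 1) = emb (k / (4 * r))
          (patF r (yf (k / (4 * r))) (k % (4 * r) + 1)) := by
        rw [hbigF]; simp only [h1, h2]
      rw [e2]
      exact stepAdj _ _ _ (patF_step r _ _ (hyfr _) hlt)
    · have hmlt : k % (4 * r) < 4 * r := Nat.mod_lt k hr4
      have hm : k % (4 * r) = 4 * r - 1 := by omega
      obtain ⟨hj, h0⟩ := wrap_divmod (4 * r) k hr4 hm
      have hjt : k / (4 * r) + 1 < t := by
        have hd : (k + 1) / (4 * r) < t := Nat.div_lt_of_lt_mul (by rw [← hn]; exact hk)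
        omega
      have hyj : yf (k / (4 * r)) = 0 := by
        rw [hyf]
        dsimp only
        rw [if_neg (by omega)]
      have e1 : bigF k = ((((k / (4 * r)) : ℕ) : ℤ) • bb, ((1:Fin 2), (0:Fin 2))) := by
        rw [hbigF]
        simp only [hm, hyj]
        rw [patF_last r 0 hr0, hemb]
        simp only [Nat.cast_zero, zero_zsmul, add_zero]
      have e2 : bigF (k + 1)
          = ((((k / (4 * r)) : ℕ) : ℤ) • bb + bb, ((0:Fin 2), (0:Fin 2))) := by
        rw [hbigF]
        simp only [hj, h0]
        rw [patF_zero r _ hr0, hemb]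
        simp only [Nat.cast_zero, zero_zsmul, add_zero]
        push_cast
        rw [add_zsmul, one_zsmul]
      rw [e1, e2]
      exact hGadj₃ _ 0
  have hclose : G.Adj (bigF (n - 1)) (bigF 0) := by
    have e3 : (t - 1 + 1) * (4 * r) = t * (4 * r) := by rw [Nat.sub_add_cancel ht0]
    have e4 : (t - 1 + 1) * (4 * r) = (t - 1) * (4 * r) + 4 * r := by ring
    have hn1 : n - 1 = (t - 1) * (4 * r) + (4 * r - 1) := by omega
    have hs := split_idx (4 * r) (t - 1) (4 * r - 1) hr4 (by omega)
    have e1 : bigF (n - 1) = ((((t - 1 : ℕ)) : ℤ) • bb + (idx : ℤ) • aa,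
        ((1:Fin 2), (0:Fin 2))) := by
      rw [hbigF]
      simp only [hn1, hs.1, hs.2]
      have hyt : yf (t - 1) = idx := by rw [hyf]; simp
      rw [hyt, patF_last r idx hidx, hemb]
    have e2 : bigF 0 = ((0 : QL), ((0:Fin 2), (0:Fin 2))) := by
      rw [hbigF]
      simp only [Nat.zero_div, Nat.zero_mod]
      rw [patF_zero r _ hr0, hemb]
      simp only [Nat.cast_zero, zero_zsmul, add_zero]
    have key : (((t - 1 : ℕ)) : ℤ) • bb + (idx : ℤ) • aa + bb = 0 := by
      rw [Nat.cast_sub (by omega : 1 ≤ t), Nat.cast_one, sub_zsmul, one_zsmul]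
      rw [← hclose0]
      abel
    rw [e1, e2]
    have h3 := hGadj₃ ((((t - 1 : ℕ)) : ℤ) • bb + (idx : ℤ) • aa) 0
    rw [key] at h3
    exact h3
  have hcov : ∀ v, v ∈ (List.range n).map bigF := by
    rintro ⟨x, α, β⟩
    obtain ⟨j, i, hj, hi, hx⟩ := hsurj x
    obtain ⟨k, hk, hpk⟩ := patF_cov r (yf j) i α β (hyfr j) hi
    refine List.mem_map.mpr ⟨j * (4 * r) + k, List.mem_range.mpr ?_, ?_⟩
    · have h1 : (j + 1) * (4 * r) ≤ t * (4 * r) := Nat.mul_le_mul_right _ (by omega)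
      have h2 : (j + 1) * (4 * r) = j * (4 * r) + 4 * r := by ring
      omega
    · have hs := split_idx (4 * r) j k hr4 hk
      rw [hbigF]
      simp only [hs.1, hs.2]
      rw [hpk, hemb]
      simp only []
      rw [hx]
  have hcardQ : Fintype.card QL = t * r := by
    have hbij : Function.Bijective
        (fun p : Fin t × Fin r => ((p.1 : ℤ) • bb + (p.2 : ℤ) • aa : QL)) := by
      constructor
      · rintro ⟨j, i⟩ ⟨j', i'⟩ h
        simp only at h
        obtain ⟨hj, hi⟩ := hinj j i j' i' j.2 i.2 j'.2 i'.2 h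
        simp only [Prod.ext_iff, Fin.ext_iff]
        exact ⟨hj, hi⟩
      · intro x
        obtain ⟨j, i, hj, hi, hx⟩ := hsurj x
        exact ⟨(⟨j, hj⟩, ⟨i, hi⟩), hx⟩
    have hc := Fintype.card_of_bijective hbij
    simpa using hc.symm
  have hcardV : Fintype.card (QL × Fin 2 × Fin 2) = n := by
    rw [Fintype.card_prod, Fintype.card_prod, Fintype.card_fin, hcardQ, hn]
    ring
  have hnd : ((List.range n).map bigF).Nodup := by
    set l := (List.range n).map bigF with hl
    have hlen : l.length = n := by simp [hl]
    have hsubset : (Finset.univ : Finset (QL × Fin 2 × Fin 2)) ⊆ l.toFinset :=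
      fun v _ => List.mem_toFinset.mpr (hcov v)
    have h1 : n ≤ l.toFinset.card := by
      have hcc := Finset.card_le_card hsubset
      rwa [Finset.card_univ, hcardV] at hcc
    have h2 : l.toFinset.card ≤ l.length := l.toFinset_card_le
    have h4 : l.toFinset.card = l.dedup.length := List.card_toFinset l
    have h3 : l.dedup.length = l.length := by omega
    exact List.dedup_eq_self.mp (List.Sublist.eq_of_length (List.dedup_sublist l) h3)
  exact hamiltonian_of_fn G bigF n (by omega) hadj hclose hnd hcov
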